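/- Suppose f admits the Lévy–Khinchine representation with pair (γ, G), where γ ∈ ℝ and G is a finite signed Borel measure on ℝ satisfying ∫_ℝ (1+x²) d|G|(x) < ∞. Then Ln f is differentiable on ℝ and for every t ∈ ℝ: (Ln f)'(t) = iγ + ∫_ℝ K₁(t,x) dG(x), where K₁(t,x) := (ix·e^{itx} − i·sin x)(1+x²)/x² for x ≠ 0 and K₁(t,0) := −t. -/

import Mathlib

open MeasureTheory Complex Filter Finset

/-- Characteristic function of a Borel measure on ℝ. -/
noncomputable def charFun (μ : MeasureTheory.Measure ℝ) (t : ℝ) : ℂ :=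
  ∫ x, Complex.exp (Complex.I * t * x) ∂μ

/-- `g` is the distinguished logarithm of `f`: continuous, `g 0 = 0`, `exp ∘ g = f`. -/
def IsDistinguishedLog (g f : ℝ → ℂ) : Prop :=
  Continuous g ∧ g 0 = 0 ∧ ∀ t : ℝ, Complex.exp (g t) = f t

/-- Integral of a complex function against a finite signed measure, via the
Jordan decomposition. -/
noncomputable def sInt (G : MeasureTheory.SignedMeasure ℝ) (φ : ℝ → ℂ) : ℂ :=
  (∫ x, φ x ∂G.toJordanDecomposition.posPart) -
    (∫ x, φ x ∂G.toJordanDecomposition.negPart)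

/-- The Lévy–Khinchine integrand `K(t,x) = (e^{itx} - 1 - it sin x)(1+x²)/x²`,
with value `-t²/2` at `x = 0`. -/
noncomputable def Kfun (t x : ℝ) : ℂ :=
  if x = 0 then -(t ^ 2) / 2
  else (Complex.exp (Complex.I * t * x) - 1 - Complex.I * t * Real.sin x) * (1 + x ^ 2) / x ^ 2

/-- The kernel `C(h,x) = (cos(hx) - 1)(1+x²)/x²`, with value `-h²/2` at `x = 0`. -/
noncomputable def Cfun (h x : ℝ) : ℂ :=
  if x = 0 then -(h ^ 2) / 2
  else ((Real.cos (h * x) - 1) * (1 + x ^ 2) / x ^ 2 : ℝ)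

/-- `g` (the distinguished logarithm of `f`) is represented by the Lévy–Khinchine
formula with spectral pair `(γ, G)`. -/
def HasLK (g : ℝ → ℂ) (γ : ℝ) (G : MeasureTheory.SignedMeasure ℝ) : Prop :=
  ∀ t : ℝ, g t = Complex.I * t * γ + sInt G (Kfun t)

/-- Symmetric second finite difference of `g` with step `h`. -/
def delta2 (g : ℝ → ℂ) (h t : ℝ) : ℂ := g (t - h) + g (t + h) - 2 * g t

/-- `n`-fold convolution power of a measure on ℝ. -/
noncomputable def convPow (ν : MeasureTheory.Measure ℝ) : ℕ → MeasureTheory.Measure ℝ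
  | 0 => MeasureTheory.Measure.dirac 0
  | n + 1 => (convPow ν n).conv ν

/-- A probability measure `μ` on ℝ is infinitely divisible. -/
def IsInfDiv (μ : MeasureTheory.Measure ℝ) : Prop :=
  ∀ n : ℕ, 0 < n → ∃ ν : MeasureTheory.Measure ℝ,
    MeasureTheory.IsProbabilityMeasure ν ∧ convPow ν n = μ

/-- A probability measure `μ` on ℝ is rationally infinitely divisible:
`μ₁ = μ ∗ μ₂` for some infinitely divisible probability measures `μ₁, μ₂`. -/
def IsRatInfDiv (μ : MeasureTheory.Measure ℝ) : Prop :=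
  ∃ μ₁ μ₂ : MeasureTheory.Measure ℝ,
    MeasureTheory.IsProbabilityMeasure μ₁ ∧ MeasureTheory.IsProbabilityMeasure μ₂ ∧
    IsInfDiv μ₁ ∧ IsInfDiv μ₂ ∧ μ₁ = μ.conv μ₂

/-- The integrand `K₁(t,x) = (ix e^{itx} - i sin x)(1+x²)/x²`, with value `-t` at `x = 0`. -/
noncomputable def K1fun (t x : ℝ) : ℂ :=
  if x = 0 then -t
  else (Complex.I * x * Complex.exp (Complex.I * t * x) - Complex.I * Real.sin x) *
    (1 + x ^ 2) / x ^ 2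


section AuxLemmas

lemma aux_expI_sub_one (u : ℝ) : ‖Complex.exp (Complex.I * u) - 1‖ ≤ |u| := by
  have h : Complex.exp (Complex.I * u) - 1
      = ((Real.cos u - 1 : ℝ) : ℂ) + (Real.sin u : ℝ) * Complex.I := by
    rw [show (Complex.I * (u:ℂ)) = (u:ℂ) * Complex.I by ring, Complex.exp_mul_I,
      ← Complex.ofReal_cos, ← Complex.ofReal_sin]
    push_cast
    ring
  rw [h, Complex.norm_add_mul_I]
  rw [show |u| = Real.sqrt (u^2) by rw [Real.sqrt_sq_eq_abs]]
  apply Real.sqrt_le_sqrt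
  have h1 : 1 - u ^ 2 / 2 ≤ Real.cos u := Real.one_sub_sq_div_two_le_cos
  have h2 : Real.cos u ≤ 1 := Real.cos_le_one u
  have h3 : Real.sin u ^ 2 + Real.cos u ^ 2 = 1 := Real.sin_sq_add_cos_sq u
  nlinarith [sq_nonneg (Real.cos u - 1), sq_nonneg u]

lemma aux_sin_sub (u : ℝ) : |Real.sin u - u| ≤ 2 * u ^ 2 := by
  rcases le_or_gt |u| 1 with h | h
  · have hb := Real.sin_bound h
    have ha : 0 ≤ |u| := abs_nonneg u
    have h2 : u ^ 2 = |u| ^ 2 := (_root_.sq_abs u).symm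
    have tri : |Real.sin u - u| ≤ |u| ^ 4 * (5/96) + |u| ^ 3 / 6 := by
      have he : Real.sin u - u = (Real.sin u - (u - u^3/6)) - u^3/6 := by ring
      rw [he]
      refine (abs_sub _ _).trans (add_le_add (hb.trans (by
        have := mul_le_of_le_one_right (pow_nonneg ha 4) h
        rw [pow_succ]; nlinarith [pow_nonneg ha 4])) ?_)
      rw [abs_div, _root_.abs_pow]
      norm_num
    refine tri.trans ?_
    nlinarith [pow_le_one₀ ha h (n := 2), mul_nonneg (mul_nonneg ha ha) ha]
  · have h1 : |Real.sin u| ≤ 1 := Real.abs_sin_le_one u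
    have : |Real.sin u - u| ≤ |Real.sin u| + |u| := abs_sub _ _
    nlinarith [abs_nonneg u, _root_.sq_abs u]

lemma aux_expI_taylor (u : ℝ) :
    ‖Complex.exp (Complex.I * u) - 1 - Complex.I * u‖ ≤ 3 * u ^ 2 := by
  have hre : Complex.exp (Complex.I * u) - 1 - Complex.I * u
      = ((Real.cos u - 1 : ℝ) : ℂ) + ((Real.sin u - u : ℝ) : ℂ) * Complex.I := by
    rw [show (Complex.I * (u:ℂ)) = (u:ℂ) * Complex.I by ring, Complex.exp_mul_I,
      ← Complex.ofReal_cos, ← Complex.ofReal_sin]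
    push_cast
    ring
  rw [hre]
  refine (norm_add_le _ _).trans ?_
  rw [norm_mul, Complex.norm_I, mul_one, Complex.norm_real, Complex.norm_real, Real.norm_eq_abs,
    Real.norm_eq_abs]
  have h1 : |Real.cos u - 1| ≤ u ^ 2 / 2 := by
    rw [abs_sub_comm, _root_.abs_of_nonneg (by linarith [Real.cos_le_one u])]
    linarith [Real.one_sub_sq_div_two_le_cos (x := u)]
  have := aux_sin_sub u
  nlinarith [sq_nonneg u]

lemma hasDerivAt_ofRealC (t : ℝ) : HasDerivAt (fun s : ℝ => (s : ℂ)) 1 t := by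
  simpa using (hasDerivAt_id t).ofReal_comp

lemma hasDerivAt_Kfun (x t : ℝ) : HasDerivAt (fun s => Kfun s x) (K1fun t x) t := by
  have h := hasDerivAt_ofRealC t
  rcases eq_or_ne x 0 with rfl | hx
  · have h2 : HasDerivAt (fun s : ℝ => -((s:ℂ)^2)/2) (-(t:ℂ)) t := by
      have h3 := ((h.mul h).neg.div_const 2)
      convert h3 using 1
      · rfl
      · funext s; simp; ring
      · ring
    simpa [Kfun, K1fun] using h2
  · simp only [Kfun, K1fun, if_neg hx]
    have h1 : HasDerivAt (fun s : ℝ => Complex.I * s * x) (Complex.I * 1 * x) t :=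
      (h.const_mul Complex.I).mul_const _
    have h2 := h1.cexp
    have h3 : HasDerivAt (fun s : ℝ => Complex.I * s * Real.sin x) (Complex.I * 1 * Real.sin x) t :=
      (h.const_mul Complex.I).mul_const _
    have h4 := (((h2.sub_const 1).sub h3).mul_const ((1 + (x:ℂ)^2))).div_const ((x:ℂ)^2)
    convert h4 using 1
    · rfl
    · funext s; rfl
    · ring

lemma abs_one_add_sq (x : ℝ) : ‖(1 + (x:ℂ)^2)‖ = 1 + x^2 := by
  rw [show (1 + (x:ℂ)^2) = ((1 + x^2 : ℝ) : ℂ) by push_cast; ring, Complex.norm_real, Real.norm_eq_abs,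
    _root_.abs_of_nonneg (by positivity)]

lemma norm_K1fun_le (t x : ℝ) : ‖K1fun t x‖ ≤ (|t| + 2) * (1 + x ^ 2) := by
  rcases eq_or_ne x 0 with rfl | hx
  · have h0 : K1fun t 0 = ((-t : ℝ) : ℂ) := by norm_num [K1fun]
    rw [h0, Complex.norm_real, Real.norm_eq_abs, abs_neg]
    nlinarith [abs_nonneg t]
  · simp only [K1fun, if_neg hx]
    have hx2 : (0:ℝ) < x^2 := by positivity
    rw [norm_div, norm_mul, abs_one_add_sq, norm_pow, Complex.norm_real, Real.norm_eq_abs, ← _root_.sq_abs,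
      _root_.sq_abs]
    have hnum : ‖Complex.I * x * Complex.exp (Complex.I * t * x)
        - Complex.I * Real.sin x‖ ≤ (|t| + 2) * x ^ 2 := by
      have he : Complex.I * (x:ℂ) * Complex.exp (Complex.I * t * x) - Complex.I * Real.sin x
          = Complex.I * ((x:ℂ) * (Complex.exp (Complex.I * (t*x : ℝ)) - 1))
            + Complex.I * (((x - Real.sin x : ℝ)) : ℂ) := by
        push_cast; ring
      rw [he]
      refine (norm_add_le _ _).trans ?_
      simp only [norm_mul, Complex.norm_I, one_mul, Complex.norm_real, Real.norm_eq_abs]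
      have h1 := aux_expI_sub_one (t*x)
      have h2 : |x - Real.sin x| ≤ 2 * (t*x)^2 / (t^2) ∨ True := Or.inr trivial
      have h3 : |x - Real.sin x| ≤ 2 * x ^ 2 := by
        rw [abs_sub_comm]; exact aux_sin_sub x
      have h4 : |x| * ‖Complex.exp (Complex.I * (t*x : ℝ)) - 1‖ ≤ |x| * |t * x| :=
        mul_le_mul_of_nonneg_left h1 (abs_nonneg x)
      have h5 : |x| * |t*x| = |t| * x ^ 2 := by
        rw [abs_mul, ← _root_.sq_abs x]; ring
      nlinarith []
    rw [div_le_iff₀ hx2]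
    calc ‖_‖ * (1 + x^2)
        ≤ ((|t| + 2) * x ^ 2) * (1 + x^2) :=
          mul_le_mul_of_nonneg_right hnum (by positivity)
      _ = (|t| + 2) * (1 + x ^ 2) * x ^ 2 := by ring

lemma norm_Kfun_le (t x : ℝ) :
    ‖Kfun t x‖ ≤ (3 * t ^ 2 + 2 * |t| + 1) * (1 + x ^ 2) := by
  rcases eq_or_ne x 0 with rfl | hx
  · have h0 : Kfun t 0 = ((-(t^2)/2 : ℝ) : ℂ) := by norm_num [Kfun]
    rw [h0, Complex.norm_real, Real.norm_eq_abs, abs_div, abs_neg, _root_.abs_of_nonneg (sq_nonneg t)]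
    rw [_root_.abs_two]
    nlinarith [abs_nonneg t, sq_nonneg t]
  · simp only [Kfun, if_neg hx]
    have hx2 : (0:ℝ) < x^2 := by positivity
    rw [norm_div, norm_mul, abs_one_add_sq, norm_pow, Complex.norm_real, Real.norm_eq_abs, ← _root_.sq_abs,
      _root_.sq_abs]
    have hnum : ‖Complex.exp (Complex.I * t * x) - 1 - Complex.I * t * Real.sin x‖
        ≤ (3 * t ^ 2 + 2 * |t| + 1) * x ^ 2 := by
      have he : Complex.exp (Complex.I * (t:ℂ) * x) - 1 - Complex.I * t * Real.sin x
          = (Complex.exp (Complex.I * (t*x : ℝ)) - 1 - Complex.I * (t*x : ℝ))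
            + Complex.I * t * (((x - Real.sin x : ℝ)) : ℂ) := by
        push_cast; ring
      rw [he]
      refine (norm_add_le _ _).trans ?_
      simp only [norm_mul, Complex.norm_I, one_mul, Complex.norm_real, Real.norm_eq_abs]
      have h1 := aux_expI_taylor (t*x)
      have h3 : |x - Real.sin x| ≤ 2 * x ^ 2 := by
        rw [abs_sub_comm]; exact aux_sin_sub x
      have h6 : 3 * (t*x)^2 = 3 * t^2 * x^2 := by ring
      nlinarith [abs_nonneg t, sq_nonneg x, mul_le_mul_of_nonneg_left h3 (abs_nonneg t)]
    rw [div_le_iff₀ hx2]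
    calc ‖_‖ * (1 + x^2)
        ≤ ((3 * t ^ 2 + 2 * |t| + 1) * x ^ 2) * (1 + x^2) :=
          mul_le_mul_of_nonneg_right hnum (by positivity)
      _ = (3 * t ^ 2 + 2 * |t| + 1) * (1 + x ^ 2) * x ^ 2 := by ring

lemma measurable_Kfun (t : ℝ) : Measurable (Kfun t) := by
  unfold Kfun
  apply Measurable.ite (MeasurableSet.singleton (0:ℝ) : MeasurableSet {x : ℝ | x = 0})
    measurable_const
  fun_prop

lemma measurable_K1fun (t : ℝ) : Measurable (K1fun t) := by
  unfold K1fun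
  apply Measurable.ite (MeasurableSet.singleton (0:ℝ) : MeasurableSet {x : ℝ | x = 0})
    measurable_const
  fun_prop

lemma key_hasDerivAt (ν : MeasureTheory.Measure ℝ) [MeasureTheory.IsFiniteMeasure ν]
    (hint : MeasureTheory.Integrable (fun x : ℝ => 1 + x ^ 2) ν) (t₀ : ℝ) :
    HasDerivAt (fun s => ∫ x, Kfun s x ∂ν) (∫ x, K1fun t₀ x ∂ν) t₀ := by
  have hb : MeasureTheory.Integrable (fun x : ℝ => (|t₀| + 3) * (1 + x ^ 2)) ν :=
    hint.const_mul _
  have hKint : MeasureTheory.Integrable (Kfun t₀) ν := by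
    refine MeasureTheory.Integrable.mono' (hint.const_mul (3 * t₀ ^ 2 + 2 * |t₀| + 1))
      ((measurable_Kfun t₀).aestronglyMeasurable) ?_
    filter_upwards with x
    simpa using norm_Kfun_le t₀ x
  have := hasDerivAt_integral_of_dominated_loc_of_deriv_le (F := fun s x => Kfun s x)
    (F' := fun s x => K1fun s x) (x₀ := t₀) (bound := fun x => (|t₀| + 3) * (1 + x ^ 2))
    (s := Metric.ball t₀ 1) (Metric.ball_mem_nhds t₀ one_pos)
    (Filter.Eventually.of_forall fun t => (measurable_Kfun t).aestronglyMeasurable)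
    hKint ((measurable_K1fun t₀).aestronglyMeasurable) ?_ hb ?_
  · exact this.2
  · filter_upwards with x t ht
    have habs : |t| ≤ |t₀| + 1 := by
      have := abs_sub_abs_le_abs_sub t t₀
      have h2 : |t - t₀| < 1 := by simpa [Real.dist_eq] using Metric.mem_ball.mp ht
      linarith
    refine (norm_K1fun_le t x).trans ?_
    have : (0:ℝ) ≤ 1 + x ^ 2 := by positivity
    nlinarith
  · filter_upwards with x t _
    exact hasDerivAt_Kfun x t

end AuxLemmas

/-- under the moment condition `∫ (1+x²) d|G| < ∞`, the distinguished
logarithm is differentiable with `(Ln f)'(t) = iγ + ∫ K₁(t,x) dG(x)`. -/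
theorem deriv_of_hasLK (μ : MeasureTheory.Measure ℝ)
    [MeasureTheory.IsProbabilityMeasure μ]
    (g : ℝ → ℂ) (hf : ∀ t : ℝ, _root_.charFun μ t ≠ 0)
    (hg : IsDistinguishedLog g (_root_.charFun μ))
    (γ : ℝ) (G : MeasureTheory.SignedMeasure ℝ) (hLK : HasLK g γ G)
    (hmom : MeasureTheory.Integrable (fun x : ℝ => 1 + x ^ 2) G.totalVariation) :
    ∀ t : ℝ, HasDerivAt g (Complex.I * γ + sInt G (K1fun t)) t := by
  intro t
  have hg' : g = fun s : ℝ => Complex.I * s * γ + sInt G (Kfun s) := funext hLK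
  rw [hg']
  have htv : G.totalVariation
      = G.toJordanDecomposition.posPart + G.toJordanDecomposition.negPart := rfl
  rw [htv] at hmom
  obtain ⟨h1, h2⟩ := MeasureTheory.integrable_add_measure.mp hmom
  have hd1 := key_hasDerivAt G.toJordanDecomposition.posPart h1 t
  have hd2 := key_hasDerivAt G.toJordanDecomposition.negPart h2 t
  have hlin : HasDerivAt (fun s : ℝ => Complex.I * s * γ) (Complex.I * γ) t := by
    have h := hasDerivAt_ofRealC t
    have := (h.const_mul Complex.I).mul_const (γ : ℂ)
    simpa using this
  have := hlin.add (hd1.sub hd2)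
  simp only [sInt]
  exact this
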